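/- Let K be a number field, let O be an order of K with conductor f, and let s ∈ O be a nonzero element with sO + f = O (so that sO is a product of invertible prime ideals of O). Let d ≥ 1 and let M be an O-module such that M^d (the direct sum of d copies of M) is isomorphic to (O/sO)^d as O-modules. Then M is isomorphic to O/sO as O-modules. -/

import Mathlib

set_option maxHeartbeats 1000000

section Helpers

variable {R : Type*} [CommRing R] {M : Type*} [AddCommGroup M] [Module R M]

lemma myIdealSmulTop (I : Ideal R) : (I • ⊤ : Submodule R R) = I := by
  apply le_antisymm
  · exact Submodule.smul_le.mpr fun r hr x _ => by
      simpa [smul_eq_mul] using I.mul_mem_right x hr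
  · intro r hr
    simpa using Submodule.smul_mem_smul hr (Submodule.mem_top (x := (1 : R)))

lemma myPiSmulTop (d : ℕ) (I : Ideal R) :
    (I • ⊤ : Submodule R (Fin d → M)) =
      Submodule.pi Set.univ (fun _ : Fin d => (I • ⊤ : Submodule R M)) := by
  apply le_antisymm
  · refine Submodule.smul_le.mpr fun r hr x _ => ?_
    intro i _
    exact Submodule.smul_mem_smul hr Submodule.mem_top
  · intro x hx
    have hrep : x = ∑ i : Fin d, Pi.single i (x i) := by
      simp [Finset.univ_sum_single]
    rw [hrep]
    refine Submodule.sum_mem _ fun i _ => ?_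
    have hxi : x i ∈ (I • ⊤ : Submodule R M) := hx i trivial
    have hmem : Pi.single i (x i) ∈
        (Submodule.map (LinearMap.single R (fun _ : Fin d => M) i) (I • ⊤)) :=
      ⟨x i, hxi, rfl⟩
    rw [Submodule.map_smul''] at hmem
    exact Submodule.smul_mono le_rfl le_top hmem

lemma myEqTopOfCard [Finite M] (p : Submodule R M) (h : Nat.card p = Nat.card M) :
    p = ⊤ := by
  have h1 : (p : Set M) ⊆ Set.univ := Set.subset_univ _
  have h2 : (Set.univ : Set M).ncard ≤ (p : Set M).ncard := by
    have hp : (p : Set M).ncard = Nat.card M := by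
      rw [← Nat.card_coe_set_eq]; exact h
    rw [hp, Set.ncard_univ]
  have h3 := Set.eq_of_subset_of_ncard_le h1 h2 (Set.toFinite _)
  exact SetLike.coe_injective (h3.trans rfl)

lemma myLocalGen [Finite R] [Finite M] {d : ℕ} (hd : 1 ≤ d)
    (e : (Fin d → M) ≃ₗ[R] (Fin d → R)) (m : Ideal R) (hm : m.IsMaximal) :
    ∃ x : M, Submodule.span R {x} ⊔ (m • ⊤ : Submodule R M) = ⊤ := by
  classical
  have hmap : (Submodule.pi Set.univ fun _ : Fin d => (m • ⊤ : Submodule R M)).map (e : (Fin d → M) →ₗ[R] (Fin d → R))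
      = Submodule.pi Set.univ fun _ : Fin d => (m • ⊤ : Submodule R R) := by
    rw [← myPiSmulTop, ← myPiSmulTop]
    show Submodule.map (e : (Fin d → M) →ₗ[R] (Fin d → R)) (m • ⊤) = m • ⊤
    rw [Submodule.map_smul'', Submodule.map_top]
    simp
  let E : (Fin d → M ⧸ (m • ⊤ : Submodule R M)) ≃ₗ[R]
      (Fin d → R ⧸ (m • ⊤ : Submodule R R)) :=
    (Submodule.quotientPi _).symm.trans ((Submodule.Quotient.equiv _ _ e hmap).trans
      (Submodule.quotientPi _))
  haveI : Finite (M ⧸ (m • ⊤ : Submodule R M)) :=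
    Finite.of_surjective _ (Submodule.Quotient.mk_surjective (m • ⊤ : Submodule R M))
  haveI : Finite (R ⧸ (m • ⊤ : Submodule R R)) :=
    Finite.of_surjective _ (Submodule.Quotient.mk_surjective (m • ⊤ : Submodule R R))
  have hc : Nat.card (M ⧸ (m • ⊤ : Submodule R M)) = Nat.card (R ⧸ (m • ⊤ : Submodule R R)) := by
    have h := Nat.card_congr E.toEquiv
    rw [Nat.card_fun, Nat.card_fun, Nat.card_eq_fintype_card (α := Fin d),
      Fintype.card_fin] at h
    exact Nat.pow_left_injective (Nat.one_le_iff_ne_zero.mp hd) h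
  have hq : (m • ⊤ : Submodule R R) = m := myIdealSmulTop m
  rw [hq] at hc
  haveI : Nontrivial (R ⧸ m) := Ideal.Quotient.nontrivial_iff.mpr hm.ne_top
  haveI : Finite (R ⧸ m) := Finite.of_surjective _
    (Submodule.Quotient.mk_surjective (m : Submodule R R))
  haveI hV : Nontrivial (M ⧸ (m • ⊤ : Submodule R M)) :=
    Finite.one_lt_card_iff_nontrivial.mp
      (by rw [hc]; exact Finite.one_lt_card_iff_nontrivial.mpr inferInstance)
  obtain ⟨v, hv⟩ := exists_ne (0 : M ⧸ (m • ⊤ : Submodule R M))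
  have hker : LinearMap.ker (LinearMap.toSpanSingleton R _ v) = m := by
    refine (hm.eq_of_le ?_ ?_).symm
    · intro htop
      apply hv
      have h1 : (1 : R) ∈ LinearMap.ker (LinearMap.toSpanSingleton R _ v) := by
        rw [htop]; trivial
      simpa using h1
    · intro c hc'
      obtain ⟨y, rfl⟩ := Submodule.Quotient.mk_surjective _ v
      show c • (Submodule.Quotient.mk y) = (0 : M ⧸ (m • ⊤ : Submodule R M))
      rw [← Submodule.Quotient.mk_smul, Submodule.Quotient.mk_eq_zero]
      exact Submodule.smul_mem_smul hc' Submodule.mem_top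
  have hspan : Submodule.span R {v} = ⊤ := by
    rw [LinearMap.span_singleton_eq_range]
    apply myEqTopOfCard
    have h := Nat.card_congr (LinearMap.quotKerEquivRange
      (LinearMap.toSpanSingleton R _ v)).toEquiv
    rw [hker] at h
    rw [← h, hc]
  obtain ⟨x, rfl⟩ := Submodule.Quotient.mk_surjective _ v
  refine ⟨x, ?_⟩
  rw [eq_top_iff]
  intro y _
  have hy : Submodule.Quotient.mk y ∈
      Submodule.span R {(Submodule.Quotient.mk x : M ⧸ (m • ⊤ : Submodule R M))} := by
    rw [hspan]; trivial
  obtain ⟨c, hcy⟩ := Submodule.mem_span_singleton.mp hy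
  have hmem : y - c • x ∈ (m • ⊤ : Submodule R M) := by
    rw [← Submodule.Quotient.mk_eq_zero]
    rw [Submodule.Quotient.mk_sub, Submodule.Quotient.mk_smul, hcy, sub_self]
  exact Submodule.mem_sup.mpr ⟨c • x,
    Submodule.smul_mem _ _ (Submodule.mem_span_singleton_self x),
    y - c • x, hmem, by abel⟩

lemma myMain {R : Type*} [CommRing R] [Finite R] {M : Type*} [AddCommGroup M] [Module R M]
    {d : ℕ} (hd : 1 ≤ d) (e : (Fin d → M) ≃ₗ[R] (Fin d → R)) :
    Nonempty (M ≃ₗ[R] R) := by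
  classical
  have hdpos : 0 < d := hd
  haveI : Finite M := by
    have hinj : Function.Injective (fun m : M => e (fun _ => m)) := by
      intro a b hab
      exact congrFun (e.injective hab) ⟨0, hdpos⟩
    exact Finite.of_injective _ hinj
  have hcard : Nat.card M = Nat.card R := by
    have h := Nat.card_congr e.toEquiv
    rw [Nat.card_fun, Nat.card_fun, Nat.card_eq_fintype_card (α := Fin d),
      Fintype.card_fin] at h
    exact Nat.pow_left_injective (Nat.one_le_iff_ne_zero.mp hd) h
  haveI : Finite (Ideal R) :=
    Finite.of_injective (fun I : Ideal R => (I : Set R)) SetLike.coe_injective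
  let ι := {m : Ideal R // m.IsMaximal}
  haveI : Fintype ι := Fintype.ofFinite ι
  choose xm hxm using fun i : ι => myLocalGen hd e i.1 i.2
  have hcop : Pairwise fun i j : ι => IsCoprime (i.1 : Ideal R) j.1 := fun i j hij =>
    Ideal.isCoprime_iff_sup_eq.mpr
      (Ideal.IsMaximal.coprime_of_ne i.2 j.2 (fun h => hij (Subtype.ext h)))
  have hc := fun i : ι => Ideal.exists_forall_sub_mem_ideal (ι := ι) hcop
      (fun j => if i = j then 1 else 0)
  choose c hcc using hc
  set x := ∑ i : ι, c i • xm i with hx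
  have hkey : ∀ i : ι, Submodule.span R {x} ⊔ (i.1 • ⊤ : Submodule R M) = ⊤ := by
    intro i
    have hdiff : x - xm i ∈ (i.1 • ⊤ : Submodule R M) := by
      have hrw : x - xm i = (c i - 1) • xm i + ∑ j ∈ Finset.univ.erase i, c j • xm j := by
        rw [hx, ← Finset.add_sum_erase _ _ (Finset.mem_univ i), sub_smul, one_smul]
        abel
      rw [hrw]
      refine Submodule.add_mem _ (Submodule.smul_mem_smul ?_ Submodule.mem_top)
        (Submodule.sum_mem _ fun j hj => Submodule.smul_mem_smul ?_ Submodule.mem_top)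
      · simpa using hcc i i
      · simpa [if_neg (Finset.mem_erase.mp hj).1] using hcc j i
    have hle : Submodule.span R {xm i} ⊔ (i.1 • ⊤ : Submodule R M) ≤
        Submodule.span R {x} ⊔ (i.1 • ⊤ : Submodule R M) := by
      refine sup_le (Submodule.span_le.mpr ?_) le_sup_right
      intro z hz
      rw [Set.mem_singleton_iff.mp hz]
      exact Submodule.mem_sup.mpr ⟨x, Submodule.mem_span_singleton_self x,
        -(x - xm i), neg_mem hdiff, by abel⟩
    exact eq_top_iff.mpr ((hxm i).symm.trans_le hle)
  have hcyc : Submodule.span R {x} = ⊤ := by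
    by_contra hne
    haveI : Finite (Submodule R M) :=
      Finite.of_injective (fun p : Submodule R M => (p : Set M)) SetLike.coe_injective
    obtain ⟨P, hPs, hPmax⟩ := Set.Finite.exists_maximalFor id
      {P : Submodule R M | Submodule.span R {x} ≤ P ∧ P ≠ ⊤} (Set.toFinite _)
      ⟨Submodule.span R {x}, le_rfl, hne⟩
    have hco : IsCoatom P := by
      refine ⟨hPs.2, fun Q hQ => ?_⟩
      by_contra hQne
      exact hQ.not_ge (hPmax ⟨le_trans hPs.1 hQ.le, hQne⟩ hQ.le)
    haveI : Finite (M ⧸ P) := Finite.of_surjective _ (Submodule.Quotient.mk_surjective P)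
    have hsimple : IsSimpleModule R (M ⧸ P) := isSimpleModule_iff_isCoatom.mpr hco
    obtain ⟨m, hm, ⟨g⟩⟩ := isSimpleModule_iff_quot_maximal.mp hsimple
    have hmP : (m • ⊤ : Submodule R M) ≤ P := by
      refine Submodule.smul_le.mpr fun r hr y _ => ?_
      have hz : g (Submodule.Quotient.mk (r • y)) = 0 := by
        rw [Submodule.Quotient.mk_smul, map_smul]
        obtain ⟨t, ht⟩ := Ideal.Quotient.mk_surjective (g (Submodule.Quotient.mk y))
        rw [← ht]
        show r • (Submodule.Quotient.mk t : R ⧸ (m : Submodule R R)) = 0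
        rw [← Submodule.Quotient.mk_smul, Submodule.Quotient.mk_eq_zero]
        rw [smul_eq_mul]
        exact Ideal.mul_mem_right t m hr
      have h0 : (Submodule.Quotient.mk (r • y) : M ⧸ P) = 0 := by
        apply g.injective
        rw [hz, map_zero]
      exact (Submodule.Quotient.mk_eq_zero _).mp h0
    have htop : (⊤ : Submodule R M) ≤ P := by
      rw [← hkey ⟨m, hm⟩]
      exact sup_le hPs.1 hmP
    exact hPs.2 (top_le_iff.mp htop)
  let f := LinearMap.toSpanSingleton R M x
  have hfs : Function.Surjective f := by
    rw [← LinearMap.range_eq_top, ← LinearMap.span_singleton_eq_range]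
    exact hcyc
  haveI : Fintype R := Fintype.ofFinite R
  haveI : Fintype M := Fintype.ofFinite M
  have hbij : Function.Bijective f :=
    (Fintype.bijective_iff_surjective_and_card f).mpr
      ⟨hfs, by simpa [Nat.card_eq_fintype_card] using hcard.symm⟩
  exact ⟨(LinearEquiv.ofBijective f hbij).symm⟩

end Helpers

lemma myBridge {A : Type*} [CommRing A] (s : A) [Finite (A ⧸ Ideal.span {s})]
    {M : Type*} [AddCommGroup M] [Module A M] (htor : Module.IsTorsionBy A M s)
    {d : ℕ} (hd : 1 ≤ d) (e : (Fin d → M) ≃ₗ[A] (Fin d → A ⧸ Ideal.span {s})) :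
    Nonempty (M ≃ₗ[A] A ⧸ Ideal.span {s}) := by
  classical
  letI instRM : Module (A ⧸ Ideal.span {s}) M := Module.IsTorsionBy.module htor
  have hmk : ∀ (a : A) (x : M), (Ideal.Quotient.mk (Ideal.span {s}) a) • x = a • x :=
    fun a x => Module.IsTorsionBy.mk_smul htor a x
  have hmkR : ∀ (a : A) (q : A ⧸ Ideal.span {s}),
      (Ideal.Quotient.mk (Ideal.span {s}) a) • q = a • q := by
    intro a q
    obtain ⟨b, rfl⟩ := Ideal.Quotient.mk_surjective q
    have h1 : a • (Ideal.Quotient.mk (Ideal.span {s}) b) =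
        Ideal.Quotient.mk (Ideal.span {s}) (a * b) := by
      rw [← Ideal.Quotient.mk_eq_mk, ← Ideal.Quotient.mk_eq_mk,
        ← Submodule.Quotient.mk_smul, smul_eq_mul]
    rw [h1, smul_eq_mul, ← map_mul]
  let e' : (Fin d → M) ≃ₗ[A ⧸ Ideal.span {s}] (Fin d → A ⧸ Ideal.span {s}) :=
    { toFun := e
      invFun := e.symm
      left_inv := e.left_inv
      right_inv := e.right_inv
      map_add' := e.map_add
      map_smul' := by
        intro r v
        obtain ⟨a, rfl⟩ := Ideal.Quotient.mk_surjective r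
        have hv : (Ideal.Quotient.mk (Ideal.span {s}) a) • v = a • v :=
          funext fun i => hmk a (v i)
        have hw : (Ideal.Quotient.mk (Ideal.span {s}) a) • e v = a • e v :=
          funext fun i => hmkR a (e v i)
        simp only [RingHom.id_apply]
        rw [hv, hw, map_smul] }
  obtain ⟨g⟩ := myMain hd e'
  exact ⟨{ toFun := g
           invFun := g.symm
           left_inv := g.left_inv
           right_inv := g.right_inv
           map_add' := g.map_add
           map_smul' := fun a x => by
             simp only [RingHom.id_apply]
             rw [← hmk a x, map_smul, hmkR a (g x)] }⟩



/-- The conductor of an order `O` in a number field `K`: the ideal of `O` consisting of those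
`a ∈ O` such that `a * x ∈ O` for every element `x` of the ring of integers of `K`
(i.e. every `x : K` integral over `ℤ`). -/
def conductorIdeal (K : Type*) [Field K] (O : Subalgebra ℤ K) : Ideal ↥O where
  carrier := {a : ↥O | ∀ x : K, IsIntegral ℤ x → (a : K) * x ∈ O}
  add_mem' := by
    intro a b ha hb x hx
    rw [Subalgebra.coe_add, add_mul]
    exact add_mem (ha x hx) (hb x hx)
  zero_mem' := by
    intro x hx
    simpa using O.zero_mem
  smul_mem' := by
    intro c a ha x hx
    rw [smul_eq_mul, Subalgebra.coe_mul, mul_assoc]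
    exact mul_mem c.2 (ha x hx)

set_option synthInstance.maxHeartbeats 800000 in
/-- Let `K` be a number field, `O` an order of `K` with conductor `f`, and
`s ∈ O` nonzero with `sO + f = O` (so `sO` is a product of invertible prime ideals of `O`).
Let `d ≥ 1` and let `M` be an `O`-module such that `M^d ≅ (O/sO)^d` as `O`-modules.  Then
`M ≅ O/sO` as `O`-modules. -/
theorem cancellation_for_modules_over_quotient_of_order
    (K : Type*) [Field K] [NumberField K] (O : Subalgebra ℤ K)
    [Module.Finite ℤ ↥O] [IsFractionRing ↥O K]
    (s : ↥O) (hs : s ≠ 0) (hcop : Ideal.span {s} ⊔ conductorIdeal K O = ⊤)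
    (d : ℕ) (hd : 1 ≤ d)
    (M : Type*) [AddCommGroup M] [Module ↥O M]
    (e : (Fin d → M) ≃ₗ[↥O] (Fin d → ↥O ⧸ Ideal.span {s})) :
    Nonempty (M ≃ₗ[↥O] ↥O ⧸ Ideal.span {s}) := by
  haveI : NoZeroSMulDivisors ℤ ↥O := by
    refine ⟨fun {c} {x} h => ?_⟩
    rcases eq_or_ne c 0 with hc | hc
    · exact Or.inl hc
    · refine Or.inr ?_
      have : (c : ↥O) * x = 0 := by
        rw [← zsmul_eq_mul]; exact h
      rcases mul_eq_zero.mp this with h1 | h1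
      · exfalso
        exact hc (by exact_mod_cast (Int.cast_eq_zero (α := ↥O)).mp h1)
      · exact h1
  haveI : Module.Free ℤ ↥O := Module.free_of_finite_type_torsion_free'
  haveI : Finite (↥O ⧸ Ideal.span {s}) := by
    have := Ideal.finiteQuotientOfFreeOfNeBot (Ideal.span {s})
      (by simpa [Ideal.span_singleton_eq_bot] using hs)
    exact this
  have htor : Module.IsTorsionBy ↥O M s := by
    intro m
    have h1 : e (s • fun _ : Fin d => m) = 0 := by
      rw [map_smul]
      funext i
      show s • (e fun _ : Fin d => m) i = 0
      obtain ⟨b, hb⟩ := Ideal.Quotient.mk_surjective ((e fun _ : Fin d => m) i)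
      rw [← hb, ← Ideal.Quotient.mk_eq_mk, ← Submodule.Quotient.mk_smul,
        Submodule.Quotient.mk_eq_zero, smul_eq_mul]
      exact Ideal.mem_span_singleton.mpr ⟨b, rfl⟩
    have h2 : (s • fun _ : Fin d => m) = (0 : Fin d → M) := by
      apply e.injective
      rw [h1, map_zero]
    have h3 := congrFun h2 ⟨0, hd⟩
    simpa using h3
  exact myBridge s htor hd e
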